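/- Let x, y, z : ℝ² → ℝ, with points of ℝ² written (t, s), where x and z are twice continuously differentiable and y is continuously differentiable. Assume the Legendrian condition ∂z/∂s (t,s) = y(t,s) · ∂x/∂s (t,s) for all (t,s), and define H(t,s) = ∂z/∂t (t,s) − y(t,s) · ∂x/∂t (t,s). Then for all (t,s): (i) e^t · ( ∂(z+H)/∂t (t,s) − y(t,s) · ∂x/∂t (t,s) ) = ∂/∂t ( e^t H(t,s) ), and (ii) e^t · ( ∂(z+H)/∂s (t,s) − y(t,s) · ∂x/∂s (t,s) ) = ∂/∂s ( e^t H(t,s) ). -/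

import Mathlib

open Real

/-- Partial derivative in the first variable `t` of a function on `ℝ²` (points written `(t,s)`). -/
noncomputable def pt (f : ℝ × ℝ → ℝ) (p : ℝ × ℝ) : ℝ := deriv (fun t => f (t, p.2)) p.1

/-- Partial derivative in the second variable `s` of a function on `ℝ²` (points written `(t,s)`). -/
noncomputable def ps (f : ℝ × ℝ → ℝ) (p : ℝ × ℝ) : ℝ := deriv (fun s => f (p.1, s)) p.2

lemma hasDerivAt_pt (f : ℝ × ℝ → ℝ) (hf : Differentiable ℝ f) (p : ℝ × ℝ) :
    HasDerivAt (fun t => f (t, p.2)) (fderiv ℝ f p ((1:ℝ), (0:ℝ))) p.1 := by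
  have h1 : HasDerivAt (fun t : ℝ => (t, p.2)) ((1:ℝ), (0:ℝ)) p.1 :=
    (hasDerivAt_id p.1).prodMk (hasDerivAt_const _ _)
  have := ((hf (p.1, p.2)).hasFDerivAt).comp_hasDerivAt p.1 h1
  exact this

lemma hasDerivAt_ps (f : ℝ × ℝ → ℝ) (hf : Differentiable ℝ f) (p : ℝ × ℝ) :
    HasDerivAt (fun s => f (p.1, s)) (fderiv ℝ f p ((0:ℝ), (1:ℝ))) p.2 := by
  have h1 : HasDerivAt (fun s : ℝ => (p.1, s)) ((0:ℝ), (1:ℝ)) p.2 :=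
    (hasDerivAt_const _ _).prodMk (hasDerivAt_id p.2)
  have := ((hf (p.1, p.2)).hasFDerivAt).comp_hasDerivAt p.2 h1
  exact this

lemma contDiff_pt (f : ℝ × ℝ → ℝ) (hf : ContDiff ℝ 2 f) :
    ContDiff ℝ 1 (fun q => fderiv ℝ f q ((1:ℝ), (0:ℝ))) := by
  have h : ContDiff ℝ 1 (fun q => fderiv ℝ f q) := hf.fderiv_right (by norm_num)
  exact (ContinuousLinearMap.apply ℝ ℝ ((1:ℝ), (0:ℝ))).contDiff.comp h

theorem deformed_trace_is_exact (x y z : ℝ × ℝ → ℝ)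
    (hx : ContDiff ℝ 2 x) (hz : ContDiff ℝ 2 z) (hy : ContDiff ℝ 1 y)
    (hLeg : ∀ p : ℝ × ℝ, ps z p = y p * ps x p) :
    ∀ p : ℝ × ℝ,
      Real.exp p.1 *
          (pt (fun q => z q + (pt z q - y q * pt x q)) p - y p * pt x p)
        = pt (fun q => Real.exp q.1 * (pt z q - y q * pt x q)) p ∧
      Real.exp p.1 *
          (ps (fun q => z q + (pt z q - y q * pt x q)) p - y p * ps x p)
        = ps (fun q => Real.exp q.1 * (pt z q - y q * pt x q)) p := by
  intro p
  have hxd : Differentiable ℝ x := hx.differentiable (by norm_num)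
  have hzd : Differentiable ℝ z := hz.differentiable (by norm_num)
  have hyd : Differentiable ℝ y := hy.differentiable (by norm_num)
  -- pt f agrees with fderiv applied to (1,0)
  have hptz : ∀ q, pt z q = fderiv ℝ z q ((1:ℝ), (0:ℝ)) :=
    fun q => (hasDerivAt_pt z hzd q).deriv
  have hptx : ∀ q, pt x q = fderiv ℝ x q ((1:ℝ), (0:ℝ)) :=
    fun q => (hasDerivAt_pt x hxd q).deriv
  set H : ℝ × ℝ → ℝ := fun q => pt z q - y q * pt x q with hHdef
  have hHeq : H = fun q => fderiv ℝ z q ((1:ℝ), (0:ℝ)) - y q * fderiv ℝ x q ((1:ℝ), (0:ℝ)) := by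
    funext q; simp [hHdef, hptz q, hptx q]
  have hH1 : ContDiff ℝ 1 H := by
    rw [hHeq]
    exact (contDiff_pt z hz).sub (hy.mul (contDiff_pt x hx))
  have hHd : Differentiable ℝ H := hH1.differentiable (by norm_num)
  have hzt := hasDerivAt_pt z hzd p
  have hHt := hasDerivAt_pt H hHd p
  have hzs := hasDerivAt_ps z hzd p
  have hHs := hasDerivAt_ps H hHd p
  constructor
  · -- t-direction
    have hL : pt (fun q => z q + H q) p
        = fderiv ℝ z p ((1:ℝ), (0:ℝ)) + fderiv ℝ H p ((1:ℝ), (0:ℝ)) := (hzt.add hHt).deriv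
    have hR : pt (fun q => Real.exp q.1 * H q) p
        = Real.exp p.1 * H p + Real.exp p.1 * fderiv ℝ H p ((1:ℝ), (0:ℝ)) := by
      have := ((Real.hasDerivAt_exp p.1).mul hHt)
      exact this.deriv
    rw [hL, hR, hHdef]
    simp only [hptz p, hptx p]
    ring
  · -- s-direction
    have hL : ps (fun q => z q + H q) p
        = fderiv ℝ z p ((0:ℝ), (1:ℝ)) + fderiv ℝ H p ((0:ℝ), (1:ℝ)) := (hzs.add hHs).deriv
    have hR : ps (fun q => Real.exp q.1 * H q) p
        = Real.exp p.1 * fderiv ℝ H p ((0:ℝ), (1:ℝ)) := by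
      exact (hHs.const_mul (Real.exp p.1)).deriv
    have hpsz : ps z p = fderiv ℝ z p ((0:ℝ), (1:ℝ)) := hzs.deriv
    have hpsx : ps x p = fderiv ℝ x p ((0:ℝ), (1:ℝ)) := (hasDerivAt_ps x hxd p).deriv
    have hleg := hLeg p
    rw [hpsz, hpsx] at hleg
    rw [hL, hR, hpsx, hleg]
    ring
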